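/- Consider the periodic transport x ↦ x + cs (mod 1) on [0,1] with speed c ≠ 0, an observation window [a,b] ⊂ (0,1), and define X_t(x) = ∫₀^t 1_{[a,b]}(x + cs mod 1) ds. Then inf_x X_t(x) > 0 if and only if t > (1 - (b - a))/|c|. -/

import Mathlib

open MeasureTheory Real

noncomputable def kinF (a b : ℝ) : ℝ → ℝ :=
  (Int.fract ⁻¹' Set.Icc a b).indicator fun _ => 1

lemma kinS_meas (a b : ℝ) : MeasurableSet (Int.fract ⁻¹' Set.Icc a b) :=
  measurable_fract measurableSet_Icc

lemma kinF_eq (a b y : ℝ) :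
    Set.indicator (Set.Icc a b) (fun _ => (1:ℝ)) (Int.fract y) = kinF a b y :=
  (Set.indicator_comp_right Int.fract (s := Set.Icc a b) (g := fun _ => (1:ℝ))).symm ▸ rfl

lemma kinF_nonneg (a b y : ℝ) : 0 ≤ kinF a b y :=
  Set.indicator_nonneg (fun _ _ => zero_le_one) y

lemma kinF_le_one (a b y : ℝ) : kinF a b y ≤ 1 := by
  unfold kinF Set.indicator
  split <;> norm_num

lemma kinF_per (a b : ℝ) : Function.Periodic (kinF a b) 1 := by
  intro y
  classical
  unfold kinF
  rw [Set.indicator_apply, Set.indicator_apply]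
  simp [Int.fract_add_one]

lemma kinF_intble (a b u v : ℝ) : IntervalIntegrable (kinF a b) volume u v := by
  apply IntegrableOn.intervalIntegrable
  refine MeasureTheory.Integrable.indicator ?_ (kinS_meas a b)
  exact integrableOn_const measure_Icc_lt_top.ne

lemma kin_unit {a b : ℝ} (ha : 0 < a) (hab : a < b) (hb : b < 1) (x : ℝ) :
    ∫ y in x..x+1, kinF a b y = b - a := by
  rw [(kinF_per a b).intervalIntegral_add_eq x 0, zero_add,
    intervalIntegral.integral_of_le zero_le_one]
  unfold kinF
  rw [setIntegral_indicator (kinS_meas a b)]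
  have hset : Set.Ioc (0:ℝ) 1 ∩ Int.fract ⁻¹' Set.Icc a b = Set.Icc a b := by
    ext y
    simp only [Set.mem_inter_iff, Set.mem_Ioc, Set.mem_preimage, Set.mem_Icc]
    constructor
    · rintro ⟨⟨h0, h1⟩, hfa, hfb⟩
      rcases eq_or_lt_of_le h1 with h1' | h1'
      · exfalso
        rw [h1', Int.fract_one] at hfa
        linarith
      · rw [Int.fract_eq_self.2 ⟨h0.le, h1'⟩] at hfa hfb
        exact ⟨hfa, hfb⟩
    · rintro ⟨hya, hyb⟩
      have h0 : 0 < y := lt_of_lt_of_le ha hya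
      have h1 : y < 1 := lt_of_le_of_lt hyb hb
      rw [Int.fract_eq_self.2 ⟨h0.le, h1⟩]
      exact ⟨⟨h0, h1.le⟩, hya, hyb⟩
  rw [hset, setIntegral_const, measureReal_def, Real.volume_Icc,
    ENNReal.toReal_ofReal (by linarith : (0:ℝ) ≤ b - a)]
  simp

lemma kin_zero {a b : ℝ} (ha : 0 < a) (hab : a < b) (hb : b < 1) {L : ℝ}
    (hL0 : 0 ≤ L) (hL : b + L ≤ 1 + a) :
    ∫ y in b..b+L, kinF a b y = 0 := by
  rw [intervalIntegral.integral_of_le (by linarith)]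
  unfold kinF
  rw [setIntegral_indicator (kinS_meas a b)]
  have hnull : volume (Set.Ioc b (b+L) ∩ Int.fract ⁻¹' Set.Icc a b) = 0 := by
    refine measure_mono_null (t := {1 + a}) ?_ (measure_singleton _)
    intro y hy
    simp only [Set.mem_inter_iff, Set.mem_Ioc, Set.mem_preimage, Set.mem_Icc] at hy
    obtain ⟨⟨hyb, hyL⟩, hfa, hfb⟩ := hy
    have hy1a : y ≤ 1 + a := le_trans hyL (by linarith)
    simp only [Set.mem_singleton_iff]
    rcases lt_trichotomy y 1 with h | h | h
    · exfalso
      rw [Int.fract_eq_self.2 ⟨by linarith, h⟩] at hfb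
      linarith
    · exfalso
      rw [h, Int.fract_one] at hfa
      linarith
    · have hfr : Int.fract y = y - 1 := by
        calc Int.fract y = Int.fract (y - 1 + 1) := by ring_nf
        _ = Int.fract (y - 1) := Int.fract_add_one _
        _ = y - 1 := Int.fract_eq_self.2 ⟨by linarith, by linarith⟩
      rw [hfr] at hfa
      linarith
  rw [setIntegral_const, measureReal_def, hnull]
  simp

lemma kin_lower {a b : ℝ} (ha : 0 < a) (hab : a < b) (hb : b < 1) (x : ℝ) {L : ℝ}
    (h0 : 0 ≤ L) (h1 : L ≤ 1) :
    (b - a) - (1 - L) ≤ ∫ y in x..x+L, kinF a b y := by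
  have hadd := intervalIntegral.integral_add_adjacent_intervals
    (kinF_intble a b x (x+L)) (kinF_intble a b (x+L) (x+1))
  have hup : ∫ y in x+L..x+1, kinF a b y ≤ 1 - L := by
    have hm := intervalIntegral.integral_mono_on (by linarith : x+L ≤ x+1)
      (kinF_intble a b _ _) (intervalIntegrable_const (c := (1:ℝ)))
      (fun y _ => kinF_le_one a b y)
    rw [intervalIntegral.integral_const] at hm
    simp at hm
    linarith
  have huni := kin_unit ha hab hb x
  linarith

theorem stmt_11 (a b c t : ℝ) (ha : 0 < a) (hab : a < b) (hb : b < 1) (hc : c ≠ 0) :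
    (0 < ⨅ x : ℝ, ∫ s in (0:ℝ)..t,
        Set.indicator (Set.Icc a b) (fun _ => (1:ℝ)) (Int.fract (x + c * s))) ↔
      (1 - (b - a)) / |c| < t := by
  have kinF_eq : ∀ y : ℝ,
      Set.indicator (Set.Icc a b) (fun _ => (1:ℝ)) (Int.fract y) = kinF a b y :=
    kinF_eq a b
  have kinF_nonneg : ∀ y, 0 ≤ kinF a b y := kinF_nonneg a b
  have kinF_le_one : ∀ y, kinF a b y ≤ 1 := kinF_le_one a b
  have kinF_intble : ∀ u v, IntervalIntegrable (kinF a b) volume u v := kinF_intble a b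
  have kin_zero : ∀ {L : ℝ}, 0 ≤ L → b + L ≤ 1 + a →
      ∫ y in b..b+L, kinF a b y = 0 :=
    fun {L} h1 h2 => kin_zero ha hab hb h1 h2
  have kin_lower : ∀ (x : ℝ) {L : ℝ}, 0 ≤ L → L ≤ 1 →
      (b - a) - (1 - L) ≤ ∫ y in x..x+L, kinF a b y :=
    fun x {L} h1 h2 => kin_lower ha hab hb x h1 h2
  have hc' : 0 < |c| := abs_pos.2 hc
  have hrw : ∀ x : ℝ, (∫ s in (0:ℝ)..t,
      Set.indicator (Set.Icc a b) (fun _ => (1:ℝ)) (Int.fract (x + c * s)))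
      = c⁻¹ * ∫ u in x..x + c * t, kinF a b u := by
    intro x
    have h1 : (∫ s in (0:ℝ)..t,
        Set.indicator (Set.Icc a b) (fun _ => (1:ℝ)) (Int.fract (x + c * s)))
        = ∫ s in (0:ℝ)..t, kinF a b (c * s + x) := by
      refine intervalIntegral.integral_congr fun s _ => ?_
      rw [add_comm x (c * s)]
      exact kinF_eq _
    rw [h1, intervalIntegral.integral_comp_mul_add (kinF a b) hc x]
    rw [mul_zero, zero_add, smul_eq_mul, add_comm (c * t) x]
  simp only [hrw]
  constructor
  · intro hpos
    by_contra hle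
    push_neg at hle
    have key : ∀ x : ℝ, |c⁻¹ * ∫ u in x..x + c * t, kinF a b u| ≤ |t| := by
      intro x
      have hbnd : ‖∫ u in x..x + c * t, kinF a b u‖ ≤ 1 * |(x + c * t) - x| := by
        apply intervalIntegral.norm_integral_le_of_norm_le_const
        intro y _
        rw [Real.norm_eq_abs, abs_of_nonneg (kinF_nonneg y)]
        exact kinF_le_one y
      rw [Real.norm_eq_abs] at hbnd
      have h2 : |(x + c * t) - x| = |c| * |t| := by
        rw [show (x + c * t) - x = c * t by ring, abs_mul]
      rw [abs_mul, abs_inv]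
      calc |c|⁻¹ * |∫ u in x..x + c * t, kinF a b u| ≤ |c|⁻¹ * (|c| * |t|) := by
            apply mul_le_mul_of_nonneg_left _ (inv_nonneg.2 hc'.le)
            rw [← h2]; linarith
        _ = |t| := by field_simp
    have hbdd : BddBelow (Set.range fun x : ℝ => c⁻¹ * ∫ u in x..x + c * t, kinF a b u) := by
      refine ⟨-|t|, ?_⟩
      rintro v ⟨x, rfl⟩
      exact (abs_le.1 (key x)).1
    rcases le_or_gt t 0 with ht0 | ht0
    · have hx : c⁻¹ * (∫ u in (0:ℝ)..(0 + c * t), kinF a b u) ≤ 0 := by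
        rcases hc.lt_or_gt with hcneg | hcpos
        · have hctnn : (0:ℝ) ≤ 0 + c * t := by nlinarith
          have hint : 0 ≤ ∫ u in (0:ℝ)..(0 + c * t), kinF a b u :=
            intervalIntegral.integral_nonneg hctnn fun y _ => kinF_nonneg y
          exact mul_nonpos_of_nonpos_of_nonneg (inv_nonpos.2 hcneg.le) hint
        · have hct : 0 + c * t ≤ 0 := by nlinarith
          have hint : (∫ u in (0:ℝ)..(0 + c * t), kinF a b u) ≤ 0 := by
            rw [intervalIntegral.integral_symm]
            have : 0 ≤ ∫ u in (0 + c * t)..(0:ℝ), kinF a b u :=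
              intervalIntegral.integral_nonneg (by linarith) fun y _ => kinF_nonneg y
            linarith
          exact mul_nonpos_of_nonneg_of_nonpos (inv_nonneg.2 hcpos.le) hint
      have hile := ciInf_le hbdd 0
      linarith
    · have hLle : |c| * t ≤ 1 - (b - a) := by
        have := (le_div_iff₀ hc').1 hle
        linarith [mul_comm t |c|]
      rcases hc.lt_or_gt with hcneg | hcpos
      · have habs : |c| = -c := abs_of_neg hcneg
        have hval : c⁻¹ * ∫ u in (b - c * t)..(b - c * t + c * t), kinF a b u = 0 := by
          rw [show b - c * t + c * t = b by ring]
          rw [intervalIntegral.integral_symm]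
          rw [show b - c * t = b + (-(c * t)) by ring]
          rw [kin_zero (by nlinarith) (by nlinarith)]
          ring
        have hile := ciInf_le hbdd (b - c * t)
        rw [hval] at hile
        linarith
      · have habs : |c| = c := abs_of_pos hcpos
        have hval : c⁻¹ * ∫ u in b..(b + c * t), kinF a b u = 0 := by
          rw [kin_zero (by nlinarith) (by nlinarith)]
          ring
        have hile := ciInf_le hbdd b
        rw [hval] at hile
        linarith
  · intro ht
    set L := min (|c| * t) 1 with hLdef
    have hL1 : 1 - (b - a) < L := by
      refine lt_min ?_ (by linarith)
      have := (div_lt_iff₀ hc').1 ht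
      linarith [mul_comm t |c|]
    have hL2 : L ≤ 1 := min_le_right _ _
    have hL0 : 0 ≤ L := le_trans (by linarith) hL1.le
    have hLct : L ≤ |c| * t := min_le_left _ _
    have hε : 0 < (L - (1 - (b - a))) / |c| := div_pos (by linarith) hc'
    refine lt_of_lt_of_le hε (le_ciInf fun x => ?_)
    rcases hc.lt_or_gt with hcneg | hcpos
    · have habs : |c| = -c := abs_of_neg hcneg
      have hLct' : L ≤ -(c * t) := by rw [habs] at hLct; linarith
      have hsplit := intervalIntegral.integral_add_adjacent_intervals
        (kinF_intble (x + c * t) ((x + c * t) + L))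
        (kinF_intble ((x + c * t) + L) ((x + c * t) + (-(c * t))))
      have hnn : 0 ≤ ∫ u in ((x + c * t) + L)..((x + c * t) + (-(c * t))), kinF a b u :=
        intervalIntegral.integral_nonneg (by linarith) fun y _ => kinF_nonneg y
      have hlow := kin_lower (x + c * t) hL0 hL2
      have hI : L - (1 - (b - a)) ≤ ∫ u in (x + c * t)..x, kinF a b u := by
        have hx : x + c * t + (-(c * t)) = x := by ring
        rw [hx] at hsplit hnn
        linarith
      rw [intervalIntegral.integral_symm]
      have h2 : c⁻¹ * -(∫ u in (x + c * t)..x, kinF a b u)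
          = (∫ u in (x + c * t)..x, kinF a b u) / (-c) := by
        rw [mul_neg, div_neg, div_eq_inv_mul]
      rw [h2, habs]
      have hcn : (0:ℝ) < -c := by linarith
      exact div_le_div_of_nonneg_right hI hcn.le
    · have habs : |c| = c := abs_of_pos hcpos
      have hLct' : L ≤ c * t := by rw [habs] at hLct; linarith
      have hsplit := intervalIntegral.integral_add_adjacent_intervals
        (kinF_intble x (x + L)) (kinF_intble (x + L) (x + c * t))
      have hnn : 0 ≤ ∫ u in (x + L)..(x + c * t), kinF a b u :=
        intervalIntegral.integral_nonneg (by linarith) fun y _ => kinF_nonneg y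
      have hlow := kin_lower x hL0 hL2
      have hI : L - (1 - (b - a)) ≤ ∫ u in x..(x + c * t), kinF a b u := by linarith
      rw [habs, show c⁻¹ * (∫ u in x..x + c * t, kinF a b u)
        = (∫ u in x..x + c * t, kinF a b u) / c by ring]
      exact div_le_div_of_nonneg_right hI hcpos.le
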